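/- arXiv:2209.00573 — 2 statements merged into one kernel-verified Lean document; each statement's English description precedes it below -/
import Mathlib

section
/- Let M^ be the action-invisible augmented MDP built from a finite MDP M, a defender state-observation function DObs_S, the user objective φ0 = ¬U0 𝖴 F0 and the attacker objective φ1 = ¬U1 𝖴 F1. Let π^ be a Markov strategy of M^ that is almost-sure winning from (s0, DObs_S(s0)) for ¬U^1 𝖴 F^1, and let π^1 be the finite-memory strategy it induces on M. Then Pr_{s0}(¬U1 𝖴 F1; M_{π^1}) = 1; that is, π^1 is almost-sure winning in M for the attacker's reach-avoid objective. -/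
open scoped BigOperators Classical

/-- A finite Markov decision process: finite state set `S`, finite action set `A`,
nonempty enabled-action sets, an initial state, and a transition kernel that is a
probability distribution on `S` for every state and enabled action. -/
structure MDP (S A : Type) [Fintype S] [Fintype A] where
  act : S → Finset A
  act_nonempty : ∀ s, (act s).Nonempty
  init : S
  P : S → A → S → ℝ
  P_nonneg : ∀ s a s', 0 ≤ P s a s'
  P_sum_one : ∀ s, ∀ a ∈ act s, (∑ s', P s a s') = 1

variable {S A : Type} [Fintype S] [Fintype A]

/-- `Post(s,a)`: states reachable with positive probability. -/
def post (M : MDP S A) (s : S) (a : A) : Set S := {s' | 0 < M.P s a s'}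

/-- The last state of a history `(s, l)` (state `s` followed by action-state steps `l`). -/
def lastState (s : S) (l : List (A × S)) : S :=
  (l.getLast?.map Prod.snd).getD s

/-- `(s, l)` is a (valid) history of `M`: each action is enabled and each transition
has positive probability. -/
def isHist (M : MDP S A) : S → List (A × S) → Prop
  | _, [] => True
  | s, (a, s') :: rest => a ∈ M.act s ∧ 0 < M.P s a s' ∧ isHist M s' rest

/-- The `i`-th state of the history `(s, l)`. -/
def stateAt (s : S) (l : List (A × S)) : ℕ → S
  | 0 => s
  | i + 1 => ((l[i]?).map Prod.snd).getD s

/-- `Occ(h)`: the set of states occurring in the history `(s, l)`. -/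
def occ (s : S) (l : List (A × S)) : Set S :=
  insert s {t | t ∈ l.map Prod.snd}

/-- The history `(s, l)` satisfies the reach-avoid objective `¬U 𝖴 F`. -/
def satRA (U F : Set S) (s : S) (l : List (A × S)) : Prop :=
  ∃ k ≤ l.length, stateAt s l k ∈ F ∧ ∀ i < k, stateAt s l i ∉ U ∪ F

/-- Probability of the continuation `l` of the history `(s0, pre)` under strategy `π`. -/
noncomputable def prFrom (M : MDP S A) (π : S → List (A × S) → A → ℝ) :
    S → List (A × S) → List (A × S) → ℝ
  | _, _, [] => 1
  | s0, pre, (a, s') :: rest =>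
      π s0 pre a * M.P (lastState s0 pre) a s' * prFrom M π s0 (pre ++ [(a, s')]) rest

/-- `Pr(h; M_π)`: the probability of the history `h = (s, l)` under strategy `π`. -/
noncomputable def prHist (M : MDP S A) (π : S → List (A × S) → A → ℝ)
    (s : S) (l : List (A × S)) : ℝ :=
  prFrom M π s [] l

/-- A (randomized, history-dependent) strategy: maps each history to a probability
distribution over the actions enabled at its last state. -/
structure Strategy (M : MDP S A) where
  toFun : S → List (A × S) → A → ℝ
  nonneg : ∀ s l a, 0 ≤ toFun s l a
  sum_one : ∀ s l, (∑ a, toFun s l a) = 1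
  support_mem : ∀ s l a, 0 < toFun s l a → a ∈ M.act (lastState s l)

/-- A (randomized) Markov strategy: maps each state to a probability distribution over
the actions enabled at that state. -/
structure MarkovStrategy (M : MDP S A) where
  toFun : S → A → ℝ
  nonneg : ∀ s a, 0 ≤ toFun s a
  sum_one : ∀ s, (∑ a, toFun s a) = 1
  support_mem : ∀ s a, 0 < toFun s a → a ∈ M.act s

/-- The history-dependent strategy induced by a Markov strategy. -/
def MarkovStrategy.strat {M : MDP S A} (σ : MarkovStrategy M) : Strategy M where
  toFun s l a := σ.toFun (lastState s l) a
  nonneg s l a := σ.nonneg _ a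
  sum_one s l := σ.sum_one _
  support_mem s l a h := σ.support_mem _ a h

/-- Sum of `Pr(h; M_π)` over all histories `h` of length `n` starting at `s` that
satisfy the reach-avoid objective `¬U 𝖴 F`. -/
noncomputable def satProbN (M : MDP S A) (π : S → List (A × S) → A → ℝ)
    (U F : Set S) (s : S) (n : ℕ) : ℝ :=
  ∑ f : Fin n → A × S,
    if isHist M s (List.ofFn f) ∧ satRA U F s (List.ofFn f)
    then prHist M π s (List.ofFn f) else 0

/-- `Pr_s(¬U 𝖴 F; M_π)`: supremum over `n` of `satProbN`. -/
noncomputable def prSat (M : MDP S A) (π : S → List (A × S) → A → ℝ)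
    (U F : Set S) (s : S) : ℝ :=
  ⨆ n : ℕ, satProbN M π U F s n

/-- The almost-sure winning region `ASW(¬U 𝖴 F)`. -/
def ASW (M : MDP S A) (U F : Set S) : Set S :=
  {s | ∃ π : Strategy M, prSat M π.toFun U F s = 1}

/-- `Allowed(s)`: enabled actions keeping the agent inside `ASW(¬U 𝖴 F)`
(empty for `s ∉ ASW(¬U 𝖴 F)`). -/
def allowed (M : MDP S A) (U F : Set S) (s : S) : Set A :=
  {a | s ∈ ASW M U F ∧ a ∈ M.act s ∧ post M s a ⊆ ASW M U F}

/-- A defender state-observation function: observation-equivalence classes partition the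
state space and observation-equivalent states have the same enabled actions. -/
structure ObsFun (M : MDP S A) where
  obs : S → Set S
  mem_self : ∀ s, s ∈ obs s
  eq_of_mem : ∀ s s', s' ∈ obs s → obs s' = obs s
  act_eq : ∀ s s', s' ∈ obs s → M.act s' = M.act s

/-- Action-visible belief update `Update_v(B, a, s'')`. -/
def updateV (M : MDP S A) (O : ObsFun M) (U0 F0 : Set S)
    (B : Set S) (a : A) (s'' : S) : Set S :=
  {s' | ∃ so ∈ B, a ∈ allowed M U0 F0 so ∧ s' ∈ post M so a ∧ O.obs s' = O.obs s''}

/-- Action-invisible belief update `Update_inv(B, s'')`. -/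
def updateInv (M : MDP S A) (O : ObsFun M) (U0 F0 : Set S)
    (B : Set S) (s'' : S) : Set S :=
  {s' | ∃ so ∈ B, ∃ ao ∈ allowed M U0 F0 so, s' ∈ post M so ao ∧ O.obs s' = O.obs s''}

/-- The unsafe set `U~1 = {(s,B) : s ∈ U1, B ≠ ∅} ∪ {(s,∅) : s ∈ S}` of the
augmented MDP. -/
def augU (U1 : Set S) : Set (S × Set S) :=
  {p | (p.1 ∈ U1 ∧ p.2 ≠ ∅) ∨ p.2 = ∅}

/-- The target set `F~1 = F1 × (2^S \ {∅})` of the augmented MDP. -/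
def augF (F1 : Set S) : Set (S × Set S) :=
  {p | p.1 ∈ F1 ∧ p.2 ≠ ∅}

/-- The action-visible augmented MDP `M~`. -/
noncomputable def augV (M : MDP S A) (O : ObsFun M) (U0 F0 : Set S) :
    MDP (S × Set S) A where
  act p := M.act p.1
  act_nonempty p := M.act_nonempty p.1
  init := (M.init, O.obs M.init)
  P p a q :=
    if p.2.Nonempty ∧ ∃ so ∈ p.2, a ∈ allowed M U0 F0 so then
      (if q.2 = updateV M O U0 F0 p.2 a q.1 then M.P p.1 a q.1 else 0)
    else (if q = (p.1, (∅ : Set S)) then 1 else 0)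
  P_nonneg := by
    intro p a q
    try dsimp only
    split_ifs <;> first | exact M.P_nonneg _ _ _ | norm_num
  P_sum_one := by
    intro p a ha
    by_cases hc : p.2.Nonempty ∧ ∃ so ∈ p.2, a ∈ allowed M U0 F0 so
    · simp only [if_pos hc]
      rw [Fintype.sum_prod_type]
      have : ∀ t : S,
          (∑ C : Set S, if C = updateV M O U0 F0 p.2 a t then M.P p.1 a t else 0)
            = M.P p.1 a t := by
        intro t
        simp [Finset.sum_ite_eq']
      simp only [this]
      exact M.P_sum_one p.1 a ha
    · simp only [if_neg hc]
      simp [Finset.sum_ite_eq']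

/-- The action-invisible augmented MDP `M^`. -/
noncomputable def augInv (M : MDP S A) (O : ObsFun M) (U0 F0 : Set S) :
    MDP (S × Set S) A where
  act p := M.act p.1
  act_nonempty p := M.act_nonempty p.1
  init := (M.init, O.obs M.init)
  P p a q :=
    if (∃ so ∈ p.2, a ∈ allowed M U0 F0 so) ∧ a ∈ M.act p.1 then
      (if q.2 = updateInv M O U0 F0 p.2 q.1 then M.P p.1 a q.1 else 0)
    else (if q = (p.1, (∅ : Set S)) then 1 else 0)
  P_nonneg := by
    intro p a q
    try dsimp only
    split_ifs <;> first | exact M.P_nonneg _ _ _ | norm_num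
  P_sum_one := by
    intro p a ha
    by_cases hc : (∃ so ∈ p.2, a ∈ allowed M U0 F0 so) ∧ a ∈ M.act p.1
    · simp only [if_pos hc]
      rw [Fintype.sum_prod_type]
      have : ∀ t : S,
          (∑ C : Set S, if C = updateInv M O U0 F0 p.2 t then M.P p.1 a t else 0)
            = M.P p.1 a t := by
        intro t
        simp [Finset.sum_ite_eq']
      simp only [this]
      exact M.P_sum_one p.1 a ha
    · simp only [if_neg hc]
      simp [Finset.sum_ite_eq']

/-- The defender's belief after observing (states and actions of) the history `(s0, l)`,
for an action-visible defender: `B0 = DObs_S(s0)`, `B(i+1) = Update_v(Bi, ai, s(i+1))`. -/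
def beliefV (M : MDP S A) (O : ObsFun M) (U0 F0 : Set S)
    (s0 : S) (l : List (A × S)) : Set S :=
  l.foldl (fun B p => updateV M O U0 F0 B p.1 p.2) (O.obs s0)

/-- The defender's belief after observing (the states of) the history `(s0, l)`,
for an action-invisible defender: `B0 = DObs_S(s0)`, `B(i+1) = Update_inv(Bi, s(i+1))`. -/
def beliefInv (M : MDP S A) (O : ObsFun M) (U0 F0 : Set S)
    (s0 : S) (l : List (A × S)) : Set S :=
  l.foldl (fun B p => updateInv M O U0 F0 B p.2) (O.obs s0)

/-- The finite-memory strategy on `M` induced by a Markov strategy of the action-visible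
augmented MDP `M~`. -/
noncomputable def inducedV (M : MDP S A) (O : ObsFun M) (U0 F0 : Set S)
    (σ : MarkovStrategy (augV M O U0 F0)) : Strategy M where
  toFun s l a := σ.toFun (lastState s l, beliefV M O U0 F0 s l) a
  nonneg s l a := σ.nonneg _ a
  sum_one s l := σ.sum_one _
  support_mem s l a h := σ.support_mem _ a h

/-- The finite-memory strategy on `M` induced by a Markov strategy of the
action-invisible augmented MDP `M^`. -/
noncomputable def inducedInv (M : MDP S A) (O : ObsFun M) (U0 F0 : Set S)
    (σ : MarkovStrategy (augInv M O U0 F0)) : Strategy M where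
  toFun s l a := σ.toFun (lastState s l, beliefInv M O U0 F0 s l) a
  nonneg s l a := σ.nonneg _ a
  sum_one s l := σ.sum_one _
  support_mem s l a h := σ.support_mem _ a h

/-- A ranking witness `(W, r)` for the reach-avoid objective `¬U 𝖴 F`. -/
def rankWitness (M : MDP S A) (U F : Set S) (W : Set S) (r : S → ℕ) : Prop :=
  W ∩ U = ∅ ∧
  ∀ s ∈ W \ F, ∃ a ∈ M.act s, post M s a ⊆ W ∧
    (post M s a ∩ {t ∈ W | r t < r s}).Nonempty


/-! ### Auxiliary lemmas for STATEMENT 9 -/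

lemma isHist_cons' {M : MDP S A} {s x : S} {a : A} {l : List (A × S)} :
    isHist M s ((a, x) :: l) ↔ a ∈ M.act s ∧ 0 < M.P s a x ∧ isHist M x l := Iff.rfl

lemma stateAt_cons' {s x : S} {a : A} {l : List (A × S)} {i : ℕ} (h : i ≤ l.length) :
    stateAt s ((a, x) :: l) (i + 1) = stateAt x l i := by
  cases i with
  | zero => simp [stateAt]
  | succ j =>
    have hj : j < l.length := by omega
    simp [stateAt, List.getElem?_eq_getElem hj]

lemma satRA_nil' {U F : Set S} {s : S} : satRA U F s ([] : List (A × S)) ↔ s ∈ F := by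
  constructor
  · rintro ⟨k, hk, hF, -⟩
    have : k = 0 := by simpa using hk
    subst this
    exact hF
  · intro h
    exact ⟨0, Nat.le_refl 0, h, fun i hi => absurd hi (Nat.not_lt_zero i)⟩

lemma satRA_head' {U F : Set S} {s : S} {l : List (A × S)} (h : satRA U F s l) :
    s ∈ F ∨ s ∉ U := by
  obtain ⟨k, hk, hF, hA⟩ := h
  cases k with
  | zero => exact Or.inl hF
  | succ j =>
    right
    intro hU
    exact hA 0 (Nat.succ_pos j) (Or.inl hU)

lemma satRA_cons' {U F : Set S} {s x : S} {a : A} {l : List (A × S)} :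
    satRA U F s ((a, x) :: l) ↔ s ∈ F ∨ (s ∉ U ∧ s ∉ F ∧ satRA U F x l) := by
  constructor
  · rintro ⟨k, hk, hF, hA⟩
    cases k with
    | zero => exact Or.inl hF
    | succ j =>
      right
      have hnot : s ∉ U ∪ F := hA 0 (Nat.succ_pos j)
      have hj : j ≤ l.length := by simpa using hk
      refine ⟨fun h => hnot (Or.inl h), fun h => hnot (Or.inr h), j, hj, ?_, ?_⟩
      · rwa [stateAt_cons' hj] at hF
      · intro i hi
        have := hA (i + 1) (by omega)
        rwa [stateAt_cons' (by omega)] at this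
  · rintro (hF | ⟨hU, hF, j, hj, hjF, hjA⟩)
    · exact ⟨0, Nat.zero_le _, hF, fun i hi => absurd hi (Nat.not_lt_zero i)⟩
    · refine ⟨j + 1, by simp only [List.length_cons]; omega, ?_, ?_⟩
      · rwa [stateAt_cons' hj]
      · intro i hi
        cases i with
        | zero =>
          rintro (h | h)
          exacts [hU h, hF h]
        | succ i' =>
          rw [stateAt_cons' (by omega)]
          exact hjA i' (by omega)

lemma sum_ofFn_succ' {X : Type} [Fintype X] (F : List X → ℝ) (n : ℕ) :
    ∑ f : Fin (n + 1) → X, F (List.ofFn f)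
      = ∑ x : X, ∑ g : Fin n → X, F (x :: List.ofFn g) := by
  rw [← Equiv.sum_comp (Fin.consEquiv (fun _ : Fin (n+1) => X)), Fintype.sum_prod_type]
  refine Finset.sum_congr rfl fun x _ => Finset.sum_congr rfl fun g _ => ?_
  congr 1
  simp [Fin.consEquiv, List.ofFn_succ]

lemma sum_ofFn_zero' {X : Type} [Fintype X] (F : List X → ℝ) :
    ∑ f : Fin 0 → X, F (List.ofFn f) = F [] := by
  simp [List.ofFn_zero]

section Generic

variable {γ β : Type} [Fintype γ]

/-- Markov-with-memory product probability. -/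
noncomputable def prG (N : MDP γ A) (π : β → A → ℝ) (st : β → γ)
    (nx : β → A × γ → β) : β → List (A × γ) → ℝ
  | _, [] => 1
  | b, (a, x) :: rest => π b a * N.P (st b) a x * prG N π st nx (nx b (a, x)) rest

/-- Sat probability at horizon `n` for the Markov-with-memory strategy. -/
noncomputable def satN (N : MDP γ A) (U F : Set γ) (π : β → A → ℝ) (st : β → γ)
    (nx : β → A × γ → β) (b : β) (n : ℕ) : ℝ :=
  ∑ f : Fin n → A × γ,
    if isHist N (st b) (List.ofFn f) ∧ satRA U F (st b) (List.ofFn f)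
    then prG N π st nx b (List.ofFn f) else 0

variable {N : MDP γ A} {π : β → A → ℝ} {st : β → γ} {nx : β → A × γ → β}
  {U F : Set γ}

lemma prG_nonneg (hπ0 : ∀ b a, 0 ≤ π b a) :
    ∀ (l : List (A × γ)) (b : β), 0 ≤ prG N π st nx b l
  | [], _ => zero_le_one
  | (a, x) :: rest, b =>
      mul_nonneg (mul_nonneg (hπ0 b a) (N.P_nonneg _ a x)) (prG_nonneg hπ0 rest _)

lemma pi_zero' (hπ0 : ∀ b a, 0 ≤ π b a) (hπs : ∀ b a, 0 < π b a → a ∈ N.act (st b))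
    {b : β} {a : A} (h : a ∉ N.act (st b)) : π b a = 0 :=
  le_antisymm (not_lt.1 fun hlt => h (hπs b a hlt)) (hπ0 b a)

lemma prG_zero (hπ0 : ∀ b a, 0 ≤ π b a) (hπs : ∀ b a, 0 < π b a → a ∈ N.act (st b))
    (hnx : ∀ b a x, st (nx b (a, x)) = x) :
    ∀ (l : List (A × γ)) (b : β), ¬ isHist N (st b) l → prG N π st nx b l = 0
  | [], _, h => absurd trivial h
  | (a, x) :: rest, b, h => by
    by_cases ha : a ∈ N.act (st b)
    · by_cases hp : 0 < N.P (st b) a x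
      · have hrest : ¬ isHist N x rest := fun hh => h (isHist_cons'.mpr ⟨ha, hp, hh⟩)
        have := prG_zero hπ0 hπs hnx rest (nx b (a, x))
          (by rw [hnx]; exact hrest)
        simp [prG, this]
      · have hP0 : N.P (st b) a x = 0 := le_antisymm (not_lt.1 hp) (N.P_nonneg _ _ _)
        simp [prG, hP0]
    · simp [prG, pi_zero' hπ0 hπs ha]

lemma prG_mass (hπ0 : ∀ b a, 0 ≤ π b a) (hπ1 : ∀ b, ∑ a, π b a = 1)
    (hπs : ∀ b a, 0 < π b a → a ∈ N.act (st b))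
    (hnx : ∀ b a x, st (nx b (a, x)) = x) :
    ∀ (n : ℕ) (b : β), ∑ f : Fin n → A × γ, prG N π st nx b (List.ofFn f) = 1
  | 0, b => by
    rw [sum_ofFn_zero' (prG N π st nx b)]
    rfl
  | n + 1, b => by
    rw [sum_ofFn_succ' (prG N π st nx b)]
    have step : ∀ p : A × γ, ∑ g : Fin n → A × γ, prG N π st nx b (p :: List.ofFn g)
        = π b p.1 * N.P (st b) p.1 p.2 := by
      rintro ⟨a, x⟩
      simp only [prG]
      rw [← Finset.mul_sum, prG_mass hπ0 hπ1 hπs hnx n (nx b (a, x)), mul_one]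
    simp only [step]
    rw [Fintype.sum_prod_type]
    have h2 : ∀ a : A, ∑ x : γ, π b a * N.P (st b) a x = π b a := by
      intro a
      by_cases h : 0 < π b a
      · rw [← Finset.mul_sum, N.P_sum_one _ a (hπs b a h), mul_one]
      · have hz : π b a = 0 := le_antisymm (not_lt.1 h) (hπ0 b a)
        simp [hz]
    simp only [h2]
    exact hπ1 b

lemma satN_nonneg (hπ0 : ∀ b a, 0 ≤ π b a) (b : β) (n : ℕ) :
    0 ≤ satN N U F π st nx b n :=
  Finset.sum_nonneg fun f _ => by
    split_ifs
    · exact prG_nonneg hπ0 _ _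
    · exact le_refl 0

lemma satN_le_one (hπ0 : ∀ b a, 0 ≤ π b a) (hπ1 : ∀ b, ∑ a, π b a = 1)
    (hπs : ∀ b a, 0 < π b a → a ∈ N.act (st b))
    (hnx : ∀ b a x, st (nx b (a, x)) = x) {b : β} {n : ℕ} :
    satN N U F π st nx b n ≤ 1 := by
  rw [← prG_mass hπ0 hπ1 hπs hnx n b]
  refine Finset.sum_le_sum fun f _ => ?_
  split_ifs
  · exact le_refl _
  · exact prG_nonneg hπ0 _ _

lemma satN_F (hπ0 : ∀ b a, 0 ≤ π b a) (hπ1 : ∀ b, ∑ a, π b a = 1)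
    (hπs : ∀ b a, 0 < π b a → a ∈ N.act (st b))
    (hnx : ∀ b a x, st (nx b (a, x)) = x) {b : β} {n : ℕ} (hF : st b ∈ F) :
    satN N U F π st nx b n = 1 := by
  rw [← prG_mass hπ0 hπ1 hπs hnx n b]
  unfold satN
  refine Finset.sum_congr rfl fun f _ => ?_
  by_cases hh : isHist N (st b) (List.ofFn f)
  · rw [if_pos ⟨hh, 0, Nat.zero_le _, hF, fun i hi => absurd hi (Nat.not_lt_zero i)⟩]
  · rw [if_neg (fun hc => hh hc.1), prG_zero hπ0 hπs hnx _ _ hh]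

lemma satN_U {b : β} {n : ℕ} (hU : st b ∈ U) (hF : st b ∉ F) :
    satN N U F π st nx b n = 0 := by
  unfold satN
  refine Finset.sum_eq_zero fun f _ => ?_
  rw [if_neg]
  rintro ⟨-, hsat⟩
  rcases satRA_head' hsat with h | h
  exacts [hF h, h hU]

lemma satN_zero {b : β} :
    satN N U F π st nx b 0 = if st b ∈ F then 1 else 0 := by
  unfold satN
  rw [sum_ofFn_zero' (fun l => if isHist N (st b) l ∧ satRA U F (st b) l
      then prG N π st nx b l else 0)]
  simp [isHist, satRA_nil', prG]

lemma satN_succ (hπ0 : ∀ b a, 0 ≤ π b a)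
    (hπs : ∀ b a, 0 < π b a → a ∈ N.act (st b))
    (hnx : ∀ b a x, st (nx b (a, x)) = x) {b : β} {n : ℕ}
    (hU : st b ∉ U) (hF : st b ∉ F) :
    satN N U F π st nx b (n + 1)
      = ∑ p : A × γ, π b p.1 * N.P (st b) p.1 p.2 * satN N U F π st nx (nx b p) n := by
  unfold satN
  rw [sum_ofFn_succ' (fun l => if isHist N (st b) l ∧ satRA U F (st b) l
      then prG N π st nx b l else 0)]
  refine Finset.sum_congr rfl ?_
  rintro ⟨a, x⟩ -
  rw [Finset.mul_sum]
  refine Finset.sum_congr rfl fun g _ => ?_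
  rw [hnx b a x]
  by_cases hc : a ∈ N.act (st b) ∧ 0 < N.P (st b) a x
  · by_cases h2 : isHist N x (List.ofFn g) ∧ satRA U F x (List.ofFn g)
    · rw [if_pos ⟨isHist_cons'.mpr ⟨hc.1, hc.2, h2.1⟩,
        satRA_cons'.mpr (Or.inr ⟨hU, hF, h2.2⟩)⟩, if_pos h2]
      simp [prG]
    · have hnc : ¬ (isHist N (st b) ((a, x) :: List.ofFn g)
          ∧ satRA U F (st b) ((a, x) :: List.ofFn g)) := by
        rintro ⟨hh, hs⟩
        rcases satRA_cons'.mp hs with h | h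
        · exact hF h
        · exact h2 ⟨(isHist_cons'.mp hh).2.2, h.2.2⟩
      rw [if_neg hnc, if_neg h2, mul_zero]
  · have hzero : π b a * N.P (st b) a x = 0 := by
      by_cases ha : a ∈ N.act (st b)
      · have hp : N.P (st b) a x = 0 :=
          le_antisymm (not_lt.1 fun h => hc ⟨ha, h⟩) (N.P_nonneg _ _ _)
        rw [hp, mul_zero]
      · rw [pi_zero' hπ0 hπs ha, zero_mul]
    have hnc : ¬ (isHist N (st b) ((a, x) :: List.ofFn g)
        ∧ satRA U F (st b) ((a, x) :: List.ofFn g)) := by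
      rintro ⟨hh, -⟩
      exact hc ⟨(isHist_cons'.mp hh).1, (isHist_cons'.mp hh).2.1⟩
    rw [if_neg hnc, hzero, zero_mul]

end Generic

lemma augInv_P (M : MDP S A) (O : ObsFun M) (U0 F0 : Set S)
    (s : S) (B : Set S) (a : A) (t : S) (C : Set S) :
    (augInv M O U0 F0).P (s, B) a (t, C)
      = if (∃ so ∈ B, a ∈ allowed M U0 F0 so) ∧ a ∈ M.act s then
          (if C = updateInv M O U0 F0 B t then M.P s a t else 0)
        else (if (t, C) = (s, (∅ : Set S)) then 1 else 0) := rfl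

lemma lastState_concat {s x : S} {a : A} {l : List (A × S)} :
    lastState s (l ++ [(a, x)]) = x := by
  simp [lastState, List.getLast?_concat]

lemma beliefInv_concat (M : MDP S A) (O : ObsFun M) (U0 F0 : Set S)
    {s x : S} {a : A} {l : List (A × S)} :
    beliefInv M O U0 F0 s (l ++ [(a, x)])
      = updateInv M O U0 F0 (beliefInv M O U0 F0 s l) x := by
  simp [beliefInv, List.foldl_append]

lemma prFrom_induced (M : MDP S A) (O : ObsFun M) (U0 F0 : Set S)
    (σ : MarkovStrategy (augInv M O U0 F0)) :
    ∀ (l pre : List (A × S)) (s0 : S),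
      prFrom M (inducedInv M O U0 F0 σ).toFun s0 pre l
        = prG M σ.toFun Prod.fst (fun b p => (p.2, updateInv M O U0 F0 b.2 p.2))
            (lastState s0 pre, beliefInv M O U0 F0 s0 pre) l
  | [], _, _ => rfl
  | (a, x) :: rest, pre, s0 => by
    rw [prFrom, prG, prFrom_induced M O U0 F0 σ rest (pre ++ [(a, x)]) s0,
      lastState_concat, beliefInv_concat]
    rfl

lemma prFrom_markov (M' : MDP S A) (σ : MarkovStrategy M') :
    ∀ (l pre : List (A × S)) (s0 : S),
      prFrom M' σ.strat.toFun s0 pre l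
        = prG M' σ.toFun id (fun _ p => p.2) (lastState s0 pre) l
  | [], _, _ => rfl
  | (a, x) :: rest, pre, s0 => by
    rw [prFrom, prG, prFrom_markov M' σ rest (pre ++ [(a, x)]) s0, lastState_concat]
    rfl

lemma satProbN_markov (M' : MDP S A) (σ : MarkovStrategy M') (U F : Set S)
    (s : S) (n : ℕ) :
    satProbN M' σ.strat.toFun U F s n
      = satN M' U F σ.toFun id (fun _ p => p.2) s n := by
  unfold satProbN satN prHist
  refine Finset.sum_congr rfl fun f _ => ?_
  rw [prFrom_markov]
  rfl

lemma satProbN_induced (M : MDP S A) (O : ObsFun M) (U0 F0 U1 F1 : Set S)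
    (σ : MarkovStrategy (augInv M O U0 F0)) (n : ℕ) :
    satProbN M (inducedInv M O U0 F0 σ).toFun U1 F1 M.init n
      = satN M U1 F1 σ.toFun Prod.fst (fun b p => (p.2, updateInv M O U0 F0 b.2 p.2))
          (M.init, O.obs M.init) n := by
  unfold satProbN satN prHist
  refine Finset.sum_congr rfl fun f _ => ?_
  rw [prFrom_induced]
  rfl

lemma satN_aug_le_base (M : MDP S A) (O : ObsFun M) (U0 F0 U1 F1 : Set S)
    (σ : MarkovStrategy (augInv M O U0 F0)) :
    ∀ (n : ℕ) (s : S) (B : Set S),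
      satN (augInv M O U0 F0) (augU U1) (augF F1) σ.toFun id (fun _ p => p.2) (s, B) n
        ≤ satN M U1 F1 σ.toFun Prod.fst
            (fun b p => (p.2, updateInv M O U0 F0 b.2 p.2)) (s, B) n := by
  have hπ0 : ∀ (b : S × Set S) a, 0 ≤ σ.toFun b a := σ.nonneg
  have hπ1 : ∀ (b : S × Set S), ∑ a, σ.toFun b a = 1 := σ.sum_one
  have hπsb : ∀ (b : S × Set S) a, 0 < σ.toFun b a → a ∈ M.act (Prod.fst b) :=
    fun b a h => σ.support_mem b a h
  have hπsa : ∀ (b : S × Set S) a, 0 < σ.toFun b a → a ∈ (augInv M O U0 F0).act (id b) :=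
    fun b a h => σ.support_mem b a h
  have hnxb : ∀ (b : S × Set S) (a : A) (x : S),
      Prod.fst ((fun (b : S × Set S) (p : A × S) =>
        ((p.2 : S), updateInv M O U0 F0 b.2 p.2)) b (a, x)) = x := fun _ _ _ => rfl
  have hnxa : ∀ (b : S × Set S) (a : A) (x : S × Set S),
      id ((fun (_ : S × Set S) (p : A × (S × Set S)) => p.2) b (a, x)) = x :=
    fun _ _ _ => rfl
  intro n
  induction n with
  | zero =>
    intro s B
    rw [satN_zero (N := augInv M O U0 F0) (st := id) (nx := fun _ p => p.2)
        (b := (s, B)),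
      satN_zero (N := M) (st := Prod.fst)
        (nx := fun b p => (p.2, updateInv M O U0 F0 b.2 p.2)) (b := (s, B))]
    by_cases hs : Prod.fst (s, B) ∈ F1
    · rw [if_pos hs]
      split_ifs <;> norm_num
    · rw [if_neg hs, if_neg]
      intro hc
      exact hs hc.1
  | succ n IH =>
    intro s B
    by_cases hsF : s ∈ F1
    · rw [satN_F (N := M) (st := Prod.fst)
        (nx := fun b p => (p.2, updateInv M O U0 F0 b.2 p.2)) (b := (s, B))
        hπ0 hπ1 hπsb hnxb hsF]
      exact satN_le_one hπ0 hπ1 hπsa hnxa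
    · by_cases hsink : B = ∅ ∨ s ∈ U1
      · have hU : (s, B) ∈ augU U1 := by
          rcases hsink with h | h
          · exact Or.inr h
          · by_cases hB : B = ∅
            exacts [Or.inr hB, Or.inl ⟨h, hB⟩]
        have hFc : (s, B) ∉ augF F1 := fun hc => hsF hc.1
        rw [satN_U (st := id) (nx := fun _ p => p.2) (b := (s, B)) hU hFc]
        exact satN_nonneg hπ0 _ _
      · rw [not_or] at hsink
        obtain ⟨hB, hsU⟩ := hsink
        have hUa : (s, B) ∉ augU U1 := by
          rintro (⟨h, -⟩ | h)
          exacts [hsU h, hB h]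
        have hFa : (s, B) ∉ augF F1 := fun hc => hsF hc.1
        rw [satN_succ hπ0 hπsa hnxa hUa hFa, satN_succ hπ0 hπsb hnxb hsU hsF]
        simp only [id_eq]
        rw [Fintype.sum_prod_type, Fintype.sum_prod_type]
        refine Finset.sum_le_sum fun a _ => ?_
        by_cases hcond : (∃ so ∈ B, a ∈ allowed M U0 F0 so) ∧ a ∈ M.act s
        · have e1 : (∑ q : S × Set S, σ.toFun (s, B) a
                * (augInv M O U0 F0).P (s, B) a q
                * satN (augInv M O U0 F0) (augU U1) (augF F1) σ.toFun id
                    (fun _ p => p.2) q n)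
              = ∑ t : S, σ.toFun (s, B) a * M.P s a t
                * satN (augInv M O U0 F0) (augU U1) (augF F1) σ.toFun id
                    (fun _ p => p.2) (t, updateInv M O U0 F0 B t) n := by
            rw [Fintype.sum_prod_type]
            refine Finset.sum_congr rfl fun t _ => ?_
            refine (Finset.sum_eq_single (updateInv M O U0 F0 B t) ?_ ?_).trans ?_
            · intro C _ hC
              rw [augInv_P, if_pos hcond, if_neg hC, mul_zero, zero_mul]
            · intro h
              exact absurd (Finset.mem_univ _) h
            · rw [augInv_P, if_pos hcond, if_pos rfl]
          rw [e1]
          refine Finset.sum_le_sum fun t _ => ?_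
          exact mul_le_mul_of_nonneg_left (IH t (updateInv M O U0 F0 B t))
            (mul_nonneg (σ.nonneg _ _) (M.P_nonneg _ _ _))
        · have e0 : (∑ q : S × Set S, σ.toFun (s, B) a
                * (augInv M O U0 F0).P (s, B) a q
                * satN (augInv M O U0 F0) (augU U1) (augF F1) σ.toFun id
                    (fun _ p => p.2) q n) = 0 := by
            rw [Fintype.sum_prod_type]
            refine Finset.sum_eq_zero fun t _ => ?_
            refine Finset.sum_eq_zero fun C _ => ?_
            rw [augInv_P, if_neg hcond]
            by_cases hq : ((t : S), (C : Set S)) = (s, (∅ : Set S))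
            · rw [if_pos hq, mul_one, hq]
              rw [satN_U (N := augInv M O U0 F0) (U := augU U1) (F := augF F1)
                (π := σ.toFun) (st := id) (nx := fun _ p => p.2)
                (b := (s, (∅ : Set S))) (n := n) (Or.inr rfl) (fun hc => hc.2 rfl),
                mul_zero]
            · rw [if_neg hq, mul_zero, zero_mul]
          rw [e0]
          refine Finset.sum_nonneg fun t _ => ?_
          exact mul_nonneg (mul_nonneg (σ.nonneg _ _) (M.P_nonneg _ _ _))
            (satN_nonneg hπ0 _ _)

/-- a Markov strategy of the action-invisible augmented MDP `M^` that is
almost-sure winning from `(s0, DObs_S(s0))` for `¬U^1 𝖴 F^1` induces a finite-memory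
strategy on `M` that is almost-sure winning from `s0` for `¬U1 𝖴 F1`. -/
theorem inducedInv_ASW (M : MDP S A) (O : ObsFun M) (U0 F0 U1 F1 : Set S)
    (h0 : Disjoint U0 F0) (h1 : Disjoint U1 F1)
    (σ : MarkovStrategy (augInv M O U0 F0))
    (hσ : prSat (augInv M O U0 F0) σ.strat.toFun (augU U1) (augF F1)
      (M.init, O.obs M.init) = 1) :
    prSat M (inducedInv M O U0 F0 σ).toFun U1 F1 M.init = 1 := by
  have hπ0 : ∀ (b : S × Set S) a, 0 ≤ σ.toFun b a := σ.nonneg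
  have hπ1 : ∀ (b : S × Set S), ∑ a, σ.toFun b a = 1 := σ.sum_one
  have hπsb : ∀ (b : S × Set S) a, 0 < σ.toFun b a → a ∈ M.act (Prod.fst b) :=
    fun b a h => σ.support_mem b a h
  have hnxb : ∀ (b : S × Set S) (a : A) (x : S),
      Prod.fst ((fun (b : S × Set S) (p : A × S) =>
        ((p.2 : S), updateInv M O U0 F0 b.2 p.2)) b (a, x)) = x := fun _ _ _ => rfl
  have key : ∀ n, satProbN (augInv M O U0 F0) σ.strat.toFun (augU U1) (augF F1)
      (M.init, O.obs M.init) n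
      ≤ satProbN M (inducedInv M O U0 F0 σ).toFun U1 F1 M.init n := by
    intro n
    rw [satProbN_markov, satProbN_induced]
    exact satN_aug_le_base M O U0 F0 U1 F1 σ n M.init (O.obs M.init)
  have hbd : ∀ n, satProbN M (inducedInv M O U0 F0 σ).toFun U1 F1 M.init n ≤ 1 := by
    intro n
    rw [satProbN_induced]
    exact satN_le_one hπ0 hπ1 hπsb hnxb
  have hBdd : BddAbove (Set.range fun n =>
      satProbN M (inducedInv M O U0 F0 σ).toFun U1 F1 M.init n) := by
    refine ⟨1, ?_⟩
    rintro x ⟨n, rfl⟩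
    exact hbd n
  unfold prSat
  refine le_antisymm (ciSup_le hbd) ?_
  have := hσ
  unfold prSat at this
  rw [← this]
  exact ciSup_mono hBdd key
end

section
/- Let M be a finite MDP with defender state-observation function DObs_S, user objective φ0 = ¬U0 𝖴 F0 and attacker objective φ1 = ¬U1 𝖴 F1, and let M~ and M^ be respectively the action-visible and action-invisible augmented MDPs built from these data. If the initial augmented state (s0, DObs_S(s0)) belongs to the almost-sure winning region of M~ for ¬U~1 𝖴 F~1, then (s0, DObs_S(s0)) belongs to the almost-sure winning region of M^ for ¬U^1 𝖴 F^1. In other words, if the attacker has a non-revealing intention-deception almost-sure winning strategy against the action-visible defender, he has one against the action-invisible defender. -/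
open scoped BigOperators Classical

variable {S A : Type} [Fintype S] [Fintype A]

/-! ### Auxiliary lemmas -/

section Aux

variable {S A : Type} [Fintype S] [Fintype A]

lemma lastState_cons (s : S) (a : A) (q : S) (r : List (A × S)) :
    lastState s ((a, q) :: r) = lastState q r := by
  cases r with
  | nil => simp [lastState]
  | cons x t => simp [lastState, List.getLast?]

lemma lastState_append_single (s : S) (l : List (A × S)) (a : A) (q : S) :
    lastState s (l ++ [(a, q)]) = q := by
  induction l generalizing s with
  | nil => simp [lastState]
  | cons x t ih =>
      obtain ⟨b, u⟩ := x
      rw [List.cons_append, lastState_cons, ih]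

lemma prFrom_append (M : MDP S A) (π : S → List (A × S) → A → ℝ)
    (s0 : S) (l1 l2 pre : List (A × S)) :
    prFrom M π s0 pre (l1 ++ l2)
      = prFrom M π s0 pre l1 * prFrom M π s0 (pre ++ l1) l2 := by
  induction l1 generalizing pre with
  | nil => simp [prFrom]
  | cons x t ih =>
      obtain ⟨a, q⟩ := x
      rw [List.cons_append]
      show π s0 pre a * M.P (lastState s0 pre) a q *
          prFrom M π s0 (pre ++ [(a, q)]) (t ++ l2) = _
      rw [ih]
      show _ = π s0 pre a * M.P (lastState s0 pre) a q *
          prFrom M π s0 (pre ++ [(a, q)]) t * prFrom M π s0 (pre ++ (a, q) :: t) l2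
      rw [show pre ++ (a, q) :: t = (pre ++ [(a, q)]) ++ t by simp]
      ring

lemma prFrom_nonneg (M : MDP S A) (π : Strategy M) (s0 : S) (pre l : List (A × S)) :
    0 ≤ prFrom M π.toFun s0 pre l := by
  induction l generalizing pre with
  | nil => exact zero_le_one
  | cons x t ih =>
      obtain ⟨a, q⟩ := x
      exact mul_nonneg (mul_nonneg (π.nonneg _ _ _) (M.P_nonneg _ _ _)) (ih _)

lemma prHist_nonneg (M : MDP S A) (π : Strategy M) (s0 : S) (l : List (A × S)) :
    0 ≤ prHist M π.toFun s0 l := prFrom_nonneg M π s0 [] l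

lemma step_mass (M : MDP S A) (π : Strategy M) (s0 : S) (l : List (A × S)) :
    (∑ x : A × S, π.toFun s0 l x.1 * M.P (lastState s0 l) x.1 x.2) = 1 := by
  rw [Fintype.sum_prod_type]
  have h1 : ∀ a : A, (∑ s' : S, π.toFun s0 l a * M.P (lastState s0 l) a s')
      = π.toFun s0 l a := by
    intro a
    rw [← Finset.mul_sum]
    by_cases h : π.toFun s0 l a = 0
    · simp [h]
    · have ha : a ∈ M.act (lastState s0 l) :=
        π.support_mem s0 l a (lt_of_le_of_ne (π.nonneg s0 l a) (Ne.symm h))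
      rw [M.P_sum_one _ a ha, mul_one]
  simp only [h1]
  exact π.sum_one s0 l

lemma prFrom_mass (M : MDP S A) (π : Strategy M) (s0 : S) :
    ∀ (n : ℕ) (pre : List (A × S)),
      (∑ f : Fin n → A × S, prFrom M π.toFun s0 pre (List.ofFn f)) = 1 := by
  intro n
  induction n with
  | zero => intro pre; simp [prFrom]
  | succ n ih =>
      intro pre
      rw [← Equiv.sum_comp (Fin.snocEquiv (fun _ => A × S))
        (fun f => prFrom M π.toFun s0 pre (List.ofFn f))]
      rw [Fintype.sum_prod_type]
      have key : ∀ (x : A × S) (g : Fin n → A × S),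
          List.ofFn ((Fin.snocEquiv (fun _ => A × S)) (x, g)) = List.ofFn g ++ [x] := by
        intro x g
        rw [List.ofFn_succ']
        simp [Fin.snocEquiv, List.concat_eq_append]
      simp only [key]
      rw [Finset.sum_comm]
      have h2 : ∀ g : Fin n → A × S,
          (∑ x : A × S, prFrom M π.toFun s0 pre (List.ofFn g ++ [x]))
            = prFrom M π.toFun s0 pre (List.ofFn g) := by
        intro g
        have h3 : ∀ x : A × S, prFrom M π.toFun s0 pre (List.ofFn g ++ [x])
            = prFrom M π.toFun s0 pre (List.ofFn g) *
              (π.toFun s0 (pre ++ List.ofFn g) x.1 *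
                M.P (lastState s0 (pre ++ List.ofFn g)) x.1 x.2) := by
          intro x
          rw [prFrom_append]
          obtain ⟨a, q⟩ := x
          show _ = _ * (_ * _)
          simp [prFrom]
        simp only [h3]
        rw [← Finset.mul_sum, step_mass, mul_one]
      simp only [h2]
      exact ih pre

lemma prFrom_ne_zero_isHist (M : MDP S A) (π : Strategy M) (s0 : S) :
    ∀ (l pre : List (A × S)), prFrom M π.toFun s0 pre l ≠ 0 →
      isHist M (lastState s0 pre) l := by
  intro l
  induction l with
  | nil => intro pre _; trivial
  | cons x t ih =>
      intro pre hne
      obtain ⟨a, q⟩ := x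
      have h1 : π.toFun s0 pre a ≠ 0 := by
        intro h; apply hne; show π.toFun s0 pre a * _ * _ = 0; rw [h]; ring
      have h2 : M.P (lastState s0 pre) a q ≠ 0 := by
        intro h; apply hne; show _ * M.P (lastState s0 pre) a q * _ = 0; rw [h]; ring
      have h3 : prFrom M π.toFun s0 (pre ++ [(a, q)]) t ≠ 0 := by
        intro h; apply hne; show _ * _ * prFrom M π.toFun s0 (pre ++ [(a, q)]) t = 0
        rw [h]; ring
      refine ⟨π.support_mem s0 pre a
        (lt_of_le_of_ne (π.nonneg s0 pre a) (Ne.symm h1)),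
        lt_of_le_of_ne (M.P_nonneg _ _ _) (Ne.symm h2), ?_⟩
      have := ih (pre ++ [(a, q)]) h3
      rwa [lastState_append_single] at this

end Aux

section SatAt

variable {S A : Type} [Fintype S] [Fintype A]

/-- Exact satisfaction at step `k`. -/
def satAt (U F : Set S) (s : S) (l : List (A × S)) (k : ℕ) : Prop :=
  stateAt s l k ∈ F ∧ ∀ i < k, stateAt s l i ∉ U ∪ F

omit [Fintype S] [Fintype A] in
lemma satAt_unique {U F : Set S} {s : S} {l : List (A × S)} {k k' : ℕ}
    (h : satAt U F s l k) (h' : satAt U F s l k') : k = k' := by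
  by_contra hne
  rcases Nat.lt_or_ge k k' with hlt | hge
  · exact h'.2 k hlt (Set.mem_union_right _ h.1)
  · exact h.2 k' (lt_of_le_of_ne hge (Ne.symm hne)) (Set.mem_union_right _ h'.1)

omit [Fintype S] [Fintype A] in
lemma satRA_indicator (U F : Set S) (s : S) (l : List (A × S)) (x : ℝ) :
    (if satRA U F s l then x else 0)
      = ∑ k ∈ Finset.range (l.length + 1), (if satAt U F s l k then x else 0) := by
  by_cases h : satRA U F s l
  · obtain ⟨k0, hk0, hsat, havoid⟩ := h
    rw [if_pos ⟨k0, hk0, hsat, havoid⟩]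
    rw [Finset.sum_eq_single_of_mem k0 (Finset.mem_range.mpr (Nat.lt_succ_of_le hk0))]
    · rw [if_pos ⟨hsat, havoid⟩]
    · intro k _ hk
      rw [if_neg]
      intro hks
      exact hk (satAt_unique hks ⟨hsat, havoid⟩)
  · rw [if_neg h]
    refine (Finset.sum_eq_zero ?_).symm
    intro k hk
    rw [if_neg]
    intro hks
    exact h ⟨k, Nat.lt_succ_iff.mp (Finset.mem_range.mp hk), hks.1, hks.2⟩

omit [Fintype S] [Fintype A] in
lemma stateAt_append (s : S) (l l2 : List (A × S)) (i : ℕ) (hi : i ≤ l.length) :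
    stateAt s (l ++ l2) i = stateAt s l i := by
  cases i with
  | zero => rfl
  | succ j =>
      show ((l ++ l2)[j]?.map Prod.snd).getD s = (l[j]?.map Prod.snd).getD s
      rw [List.getElem?_append, if_pos (by omega)]

omit [Fintype S] [Fintype A] in
lemma satAt_append (U F : Set S) (s : S) (l l2 : List (A × S)) (k : ℕ)
    (hk : k ≤ l.length) :
    satAt U F s (l ++ l2) k ↔ satAt U F s l k := by
  unfold satAt
  rw [stateAt_append s l l2 k hk]
  constructor
  · rintro ⟨h1, h2⟩
    exact ⟨h1, fun i hi => by rw [← stateAt_append s l l2 i (by omega)]; exact h2 i hi⟩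
  · rintro ⟨h1, h2⟩
    exact ⟨h1, fun i hi => by rw [stateAt_append s l l2 i (by omega)]; exact h2 i hi⟩

/-- Probability mass of histories satisfying exactly at their last step `k`. -/
noncomputable def exactProb (M : MDP S A) (π : S → List (A × S) → A → ℝ)
    (U F : Set S) (s : S) (k : ℕ) : ℝ :=
  ∑ g : Fin k → A × S,
    if satAt U F s (List.ofFn g) k then prHist M π s (List.ofFn g) else 0

lemma exactProb_nonneg (M : MDP S A) (π : Strategy M) (U F : Set S) (s : S) (k : ℕ) :
    0 ≤ exactProb M π.toFun U F s k := by
  refine Finset.sum_nonneg fun g _ => ?_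
  split_ifs
  · exact prHist_nonneg M π s _
  · exact le_refl 0

lemma sum_satAt_eq_exactProb (M : MDP S A) (π : Strategy M) (U F : Set S) (s : S)
    {k n : ℕ} (hkn : k ≤ n) :
    (∑ f : Fin n → A × S,
      if satAt U F s (List.ofFn f) k then prHist M π.toFun s (List.ofFn f) else 0)
      = exactProb M π.toFun U F s k := by
  obtain ⟨m, rfl⟩ : ∃ m, n = k + m := ⟨n - k, by omega⟩
  clear hkn
  induction m with
  | zero => rfl
  | succ m ih =>
      rw [show k + (m + 1) = (k + m) + 1 by omega]
      rw [← Equiv.sum_comp (Fin.snocEquiv (fun _ => A × S))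
        (fun f => if satAt U F s (List.ofFn f) k
          then prHist M π.toFun s (List.ofFn f) else 0)]
      rw [Fintype.sum_prod_type]
      have key : ∀ (x : A × S) (g : Fin (k + m) → A × S),
          List.ofFn ((Fin.snocEquiv (fun _ => A × S)) (x, g)) = List.ofFn g ++ [x] := by
        intro x g
        rw [List.ofFn_succ']
        simp [Fin.snocEquiv, List.concat_eq_append]
      simp only [key]
      rw [Finset.sum_comm]
      have h2 : ∀ g : Fin (k + m) → A × S,
          (∑ x : A × S, if satAt U F s (List.ofFn g ++ [x]) k
              then prHist M π.toFun s (List.ofFn g ++ [x]) else 0)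
            = (if satAt U F s (List.ofFn g) k
              then prHist M π.toFun s (List.ofFn g) else 0) := by
        intro g
        have hlen : k ≤ (List.ofFn g).length := by rw [List.length_ofFn]; omega
        by_cases hs : satAt U F s (List.ofFn g) k
        · have h3 : ∀ x : A × S,
              (if satAt U F s (List.ofFn g ++ [x]) k
                then prHist M π.toFun s (List.ofFn g ++ [x]) else 0)
              = prHist M π.toFun s (List.ofFn g) *
                (π.toFun s (List.ofFn g) x.1 *
                  M.P (lastState s (List.ofFn g)) x.1 x.2) := by
            intro x
            rw [if_pos ((satAt_append U F s _ [x] k hlen).mpr hs)]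
            unfold prHist
            rw [prFrom_append]
            obtain ⟨a, q⟩ := x
            show _ * (_ * _ * prFrom M π.toFun s ([] ++ List.ofFn g ++ [(a, q)]) []) = _
            show _ * (_ * _ * 1) = _
            rw [List.nil_append]
            ring
          simp only [h3]
          rw [← Finset.mul_sum, step_mass, mul_one, if_pos hs]
        · have h3 : ∀ x : A × S,
              (if satAt U F s (List.ofFn g ++ [x]) k
                then prHist M π.toFun s (List.ofFn g ++ [x]) else 0) = 0 := by
            intro x
            rw [if_neg]
            intro hc
            exact hs ((satAt_append U F s _ [x] k hlen).mp hc)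
          simp only [h3]
          rw [if_neg hs]
          simp
      simp only [h2]
      exact ih

lemma satProbN_eq_sum_exactProb (M : MDP S A) (π : Strategy M) (U F : Set S)
    (s : S) (n : ℕ) :
    satProbN M π.toFun U F s n
      = ∑ k ∈ Finset.range (n + 1), exactProb M π.toFun U F s k := by
  unfold satProbN
  have h1 : ∀ f : Fin n → A × S,
      (if isHist M s (List.ofFn f) ∧ satRA U F s (List.ofFn f)
        then prHist M π.toFun s (List.ofFn f) else 0)
      = (if satRA U F s (List.ofFn f) then prHist M π.toFun s (List.ofFn f) else 0) := by
    intro f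
    by_cases hh : isHist M s (List.ofFn f)
    · simp [hh]
    · by_cases hs : satRA U F s (List.ofFn f)
      · rw [if_neg (by tauto), if_pos hs]
        by_contra hne
        exact hh (prFrom_ne_zero_isHist M π s (List.ofFn f) [] (Ne.symm hne))
      · simp [hs, hh]
  simp only [h1]
  have h2 : ∀ f : Fin n → A × S,
      (if satRA U F s (List.ofFn f) then prHist M π.toFun s (List.ofFn f) else 0)
      = ∑ k ∈ Finset.range (n + 1),
          (if satAt U F s (List.ofFn f) k then prHist M π.toFun s (List.ofFn f) else 0) := by
    intro f
    rw [satRA_indicator, List.length_ofFn]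
  simp only [h2]
  rw [Finset.sum_comm]
  refine Finset.sum_congr rfl fun k hk => ?_
  exact sum_satAt_eq_exactProb M π U F s (Nat.lt_succ_iff.mp (Finset.mem_range.mp hk))

lemma satProbN_le_one (M : MDP S A) (π : Strategy M) (U F : Set S) (s : S) (n : ℕ) :
    satProbN M π.toFun U F s n ≤ 1 := by
  unfold satProbN
  calc (∑ f : Fin n → A × S,
      if isHist M s (List.ofFn f) ∧ satRA U F s (List.ofFn f)
        then prHist M π.toFun s (List.ofFn f) else 0)
      ≤ ∑ f : Fin n → A × S, prHist M π.toFun s (List.ofFn f) := by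
        refine Finset.sum_le_sum fun f _ => ?_
        split_ifs
        · exact le_refl _
        · exact prHist_nonneg M π s _
    _ = 1 := prFrom_mass M π s n []

end SatAt

section Transfer

variable {S A : Type} [Fintype S] [Fintype A]
variable (M : MDP S A) (O : ObsFun M) (U0 F0 : Set S)

/-- Recompute the (action-visible) beliefs along a history. -/
def vfix : Set S → List (A × (S × Set S)) → List (A × (S × Set S))
  | _, [] => []
  | B, (a, q) :: r =>
      (a, (q.1, updateV M O U0 F0 B a q.1)) :: vfix (updateV M O U0 F0 B a q.1) r

/-- Recompute the (action-invisible) beliefs along a history. -/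
def ifix : Set S → List (A × (S × Set S)) → List (A × (S × Set S))
  | _, [] => []
  | B, (_a, q) :: r =>
      (_a, (q.1, updateInv M O U0 F0 B q.1)) :: ifix (updateInv M O U0 F0 B q.1) r

/-- The running visible belief after a history. -/
def vbel : Set S → List (A × (S × Set S)) → Set S
  | B, [] => B
  | B, (a, q) :: r => vbel (updateV M O U0 F0 B a q.1) r

/-- The visible beliefs in the history are the forced ones and every step is
`Allowed`-compatible. -/
def goodVb : Set S → List (A × (S × Set S)) → Prop
  | _, [] => True
  | B, (a, q) :: r =>
      (∃ so ∈ B, a ∈ allowed M U0 F0 so) ∧ q.2 = updateV M O U0 F0 B a q.1 ∧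
        goodVb q.2 r

lemma ifix_length : ∀ (l : List (A × (S × Set S))) (B : Set S),
    (ifix M O U0 F0 B l).length = l.length := by
  intro l
  induction l with
  | nil => intro B; rfl
  | cons x r ih => intro B; obtain ⟨a, q⟩ := x; simp [ifix, ih]

omit [Fintype S] [Fintype A] in
lemma lastState_fst_congr {X : Type} (p p' : X × Set X) (l : List (A × (X × Set X)))
    (h : p.1 = p'.1) : (lastState p l).1 = (lastState p' l).1 := by
  cases hl : l.getLast? with
  | none => simp [lastState, hl, h]
  | some x => simp [lastState, hl]

lemma lastState_vfix_fst : ∀ (l : List (A × (S × Set S))) (B : Set S) (p : S × Set S),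
    (lastState p (vfix M O U0 F0 B l)).1 = (lastState p l).1 := by
  intro l
  induction l with
  | nil => intro B p; rfl
  | cons x r ih =>
      intro B p
      obtain ⟨a, q⟩ := x
      show (lastState p ((a, (q.1, updateV M O U0 F0 B a q.1)) ::
        vfix M O U0 F0 (updateV M O U0 F0 B a q.1) r)).1 = _
      rw [lastState_cons, lastState_cons, ih]
      exact lastState_fst_congr _ _ r rfl

lemma vfix_append_single : ∀ (pre : List (A × (S × Set S))) (B : Set S) (a : A)
    (q : S × Set S),
    vfix M O U0 F0 B (pre ++ [(a, q)])
      = vfix M O U0 F0 B pre ++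
        [(a, (q.1, updateV M O U0 F0 (vbel M O U0 F0 B pre) a q.1))] := by
  intro pre
  induction pre with
  | nil => intro B a q; rfl
  | cons x r ih =>
      intro B a q
      obtain ⟨b, u⟩ := x
      show (b, (u.1, updateV M O U0 F0 B b u.1)) ::
          vfix M O U0 F0 (updateV M O U0 F0 B b u.1) (r ++ [(a, q)]) = _
      rw [ih]
      rfl

lemma vbel_eq : ∀ (l : List (A × (S × Set S))) (B : Set S) (p : S × Set S),
    p.2 = B → (lastState p (vfix M O U0 F0 B l)).2 = vbel M O U0 F0 B l := by
  intro l
  induction l with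
  | nil => intro B p h; exact h
  | cons x r ih =>
      intro B p h
      obtain ⟨a, q⟩ := x
      show (lastState p ((a, (q.1, updateV M O U0 F0 B a q.1)) ::
        vfix M O U0 F0 (updateV M O U0 F0 B a q.1) r)).2 = _
      rw [lastState_cons]
      exact ih _ _ rfl

lemma ifix_fst : ∀ (l : List (A × (S × Set S))) (C : Set S),
    (ifix M O U0 F0 C l).map (fun x => (x.1, x.2.1)) = l.map (fun x => (x.1, x.2.1)) := by
  intro l
  induction l with
  | nil => intro C; rfl
  | cons x r ih => intro C; obtain ⟨a, q⟩ := x; simp [ifix, ih]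

lemma ifix_congr : ∀ (l1 l2 : List (A × (S × Set S))) (C : Set S),
    l1.map (fun x => (x.1, x.2.1)) = l2.map (fun x => (x.1, x.2.1)) →
    ifix M O U0 F0 C l1 = ifix M O U0 F0 C l2 := by
  intro l1
  induction l1 with
  | nil => intro l2 C h; cases l2 with
      | nil => rfl
      | cons y t => simp at h
  | cons x r ih =>
      intro l2 C h
      cases l2 with
      | nil => simp at h
      | cons y t =>
          obtain ⟨a, q⟩ := x
          obtain ⟨b, u⟩ := y
          simp only [List.map_cons, List.cons.injEq, Prod.mk.injEq] at h
          obtain ⟨⟨hab, hq⟩, ht⟩ := h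
          subst hab
          show (a, (q.1, updateInv M O U0 F0 C q.1)) :: _ = (a, (u.1, _)) :: _
          rw [hq]
          exact congrArg _ (ih t _ ht)

lemma vfix_congr : ∀ (l1 l2 : List (A × (S × Set S))) (B : Set S),
    l1.map (fun x => (x.1, x.2.1)) = l2.map (fun x => (x.1, x.2.1)) →
    vfix M O U0 F0 B l1 = vfix M O U0 F0 B l2 := by
  intro l1
  induction l1 with
  | nil => intro l2 B h; cases l2 with
      | nil => rfl
      | cons y t => simp at h
  | cons x r ih =>
      intro l2 B h
      cases l2 with
      | nil => simp at h
      | cons y t =>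
          obtain ⟨a, q⟩ := x
          obtain ⟨b, u⟩ := y
          simp only [List.map_cons, List.cons.injEq, Prod.mk.injEq] at h
          obtain ⟨⟨hab, hq⟩, ht⟩ := h
          subst hab
          show (a, (q.1, updateV M O U0 F0 B a q.1)) :: _ = (a, (u.1, _)) :: _
          rw [hq]
          exact congrArg _ (ih t _ ht)

lemma vfix_of_goodVb : ∀ (l : List (A × (S × Set S))) (B : Set S),
    goodVb M O U0 F0 B l → vfix M O U0 F0 B l = l := by
  intro l
  induction l with
  | nil => intro B _; rfl
  | cons x r ih =>
      intro B h
      obtain ⟨a, q⟩ := x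
      obtain ⟨_, hq, hr⟩ := h
      show (a, (q.1, updateV M O U0 F0 B a q.1)) ::
        vfix M O U0 F0 (updateV M O U0 F0 B a q.1) r = (a, q) :: r
      rw [← hq, Prod.mk.eta, ih q.2 hr]

lemma updateV_subset_updateInv {B C : Set S} (h : B ⊆ C) (a : A) (t : S) :
    updateV M O U0 F0 B a t ⊆ updateInv M O U0 F0 C t := by
  rintro s' ⟨so, hso, ha, hpost, hobs⟩
  exact ⟨so, h hso, a, ha, hpost, hobs⟩

lemma forall₂_ifix : ∀ (l : List (A × (S × Set S))) (B C : Set S), B ⊆ C →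
    goodVb M O U0 F0 B l →
    List.Forall₂ (fun q q' : S × Set S => q'.1 = q.1 ∧ q.2 ⊆ q'.2)
      (l.map Prod.snd) ((ifix M O U0 F0 C l).map Prod.snd) := by
  intro l
  induction l with
  | nil => intro B C _ _; exact List.Forall₂.nil
  | cons x r ih =>
      intro B C hsub h
      obtain ⟨a, q⟩ := x
      obtain ⟨_, hq, hr⟩ := h
      refine List.Forall₂.cons ⟨rfl, ?_⟩ (ih q.2 _ ?_ hr)
      · rw [hq]; exact updateV_subset_updateInv M O U0 F0 hsub a q.1
      · rw [hq]; exact updateV_subset_updateInv M O U0 F0 hsub a q.1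

end Transfer

section Transfer2

variable {S A : Type} [Fintype S] [Fintype A]
variable (M : MDP S A) (O : ObsFun M) (U0 F0 : Set S)

/-- The strategy on the action-invisible augmented MDP simulating a strategy of the
action-visible augmented MDP (by recomputing the visible beliefs). -/
noncomputable def transStrat (π : Strategy (augV M O U0 F0)) :
    Strategy (augInv M O U0 F0) where
  toFun p l a := π.toFun p (vfix M O U0 F0 p.2 l) a
  nonneg p l a := π.nonneg _ _ a
  sum_one p l := π.sum_one _ _
  support_mem p l a h := by
    show a ∈ M.act (lastState p l).1
    rw [← lastState_vfix_fst M O U0 F0 l p.2 p]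
    exact π.support_mem p _ a h

lemma prFrom_transfer (π : Strategy (augV M O U0 F0)) :
    ∀ (l pre pre' : List (A × (S × Set S))) (p0 : S × Set S) (t : S) (B C : Set S),
    vfix M O U0 F0 p0.2 pre' = pre →
    lastState p0 pre = (t, B) →
    lastState p0 pre' = (t, C) →
    B ⊆ C →
    goodVb M O U0 F0 B l →
    prFrom (augInv M O U0 F0) (transStrat M O U0 F0 π).toFun p0 pre'
        (ifix M O U0 F0 C l)
      = prFrom (augV M O U0 F0) π.toFun p0 pre l := by
  intro l
  induction l with
  | nil => intro pre pre' p0 t B C _ _ _ _ _; rfl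
  | cons x r ih =>
      intro pre pre' p0 t B C hfix hV hI hsub hg
      obtain ⟨a, q⟩ := x
      obtain ⟨hcond, hq, hgr⟩ := hg
      set C' := updateInv M O U0 F0 C q.1 with hC'
      show (transStrat M O U0 F0 π).toFun p0 pre' a *
          (augInv M O U0 F0).P (lastState p0 pre') a (q.1, C') *
          prFrom (augInv M O U0 F0) (transStrat M O U0 F0 π).toFun p0
            (pre' ++ [(a, (q.1, C'))]) (ifix M O U0 F0 C' r)
        = π.toFun p0 pre a *
          (augV M O U0 F0).P (lastState p0 pre) a q *
          prFrom (augV M O U0 F0) π.toFun p0 (pre ++ [(a, q)]) r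
      have hπeq : (transStrat M O U0 F0 π).toFun p0 pre' a = π.toFun p0 pre a := by
        show π.toFun p0 (vfix M O U0 F0 p0.2 pre') a = _
        rw [hfix]
      by_cases hπ : π.toFun p0 pre a = 0
      · rw [hπeq, hπ]; ring
      · have hπpos : 0 < π.toFun p0 pre a :=
          lt_of_le_of_ne (π.nonneg _ _ _) (Ne.symm hπ)
        have hact : a ∈ M.act t := by
          have := π.support_mem p0 pre a hπpos
          rw [hV] at this
          exact this
        have hcondC : ∃ so ∈ C, a ∈ allowed M U0 F0 so := by
          obtain ⟨so, hso, hallow⟩ := hcond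
          exact ⟨so, hsub hso, hallow⟩
        have hPV : (augV M O U0 F0).P (lastState p0 pre) a q = M.P t a q.1 := by
          rw [hV]
          show (if (B.Nonempty ∧ ∃ so ∈ B, a ∈ allowed M U0 F0 so) then
              (if q.2 = updateV M O U0 F0 B a q.1 then M.P t a q.1 else 0)
            else (if q = (t, (∅ : Set S)) then 1 else 0)) = M.P t a q.1
          rw [if_pos ⟨⟨hcond.choose, hcond.choose_spec.1⟩, hcond⟩, if_pos hq]
        have hPI : (augInv M O U0 F0).P (lastState p0 pre') a (q.1, C')
            = M.P t a q.1 := by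
          rw [hI]
          show (if ((∃ so ∈ C, a ∈ allowed M U0 F0 so) ∧ a ∈ M.act t) then
              (if (q.1, C').2 = updateInv M O U0 F0 C (q.1, C').1 then M.P t a q.1 else 0)
            else (if (q.1, C') = (t, (∅ : Set S)) then 1 else 0)) = M.P t a q.1
          rw [if_pos ⟨hcondC, hact⟩, if_pos rfl]
        have hvbel : vbel M O U0 F0 p0.2 pre' = B := by
          have := vbel_eq M O U0 F0 pre' p0.2 p0 rfl
          rw [hfix, hV] at this
          exact this.symm
        have hfix2 : vfix M O U0 F0 p0.2 (pre' ++ [(a, (q.1, C'))]) = pre ++ [(a, q)] := by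
          rw [vfix_append_single, hfix, hvbel]
          have : ((q.1, C') : S × Set S).1 = q.1 := rfl
          rw [this, ← hq, Prod.mk.eta]
        have hrec := ih (pre ++ [(a, q)]) (pre' ++ [(a, (q.1, C'))]) p0 q.1 q.2 C'
          hfix2 (by rw [lastState_append_single]) (by rw [lastState_append_single])
          (hq ▸ updateV_subset_updateInv M O U0 F0 hsub a q.1) hgr
        rw [hπeq, hPV, hPI, hrec]

lemma goodVb_of_isHist : ∀ (l : List (A × (S × Set S))) (p : S × Set S),
    isHist (augV M O U0 F0) p l → (∀ x ∈ l, x.2.2 ≠ (∅ : Set S)) →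
    goodVb M O U0 F0 p.2 l := by
  intro l
  induction l with
  | nil => intro p _ _; trivial
  | cons x r ih =>
      intro p hh hne
      obtain ⟨a, q⟩ := x
      obtain ⟨ha, hP, hr⟩ := hh
      by_cases hc : p.2.Nonempty ∧ ∃ so ∈ p.2, a ∈ allowed M U0 F0 so
      · have hforced : q.2 = updateV M O U0 F0 p.2 a q.1 := by
          by_contra hneq
          have h0 : (augV M O U0 F0).P p a q = 0 := by
            show (if (p.2.Nonempty ∧ ∃ so ∈ p.2, a ∈ allowed M U0 F0 so) then
                (if q.2 = updateV M O U0 F0 p.2 a q.1 then M.P p.1 a q.1 else 0)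
              else (if q = (p.1, (∅ : Set S)) then 1 else 0)) = 0
            rw [if_pos hc, if_neg hneq]
          rw [h0] at hP
          exact lt_irrefl 0 hP
        exact ⟨hc.2, hforced,
          ih q hr (fun x hx => hne x (List.mem_cons_of_mem _ hx))⟩
      · exfalso
        have hq : q = (p.1, (∅ : Set S)) := by
          by_contra hneq
          have h0 : (augV M O U0 F0).P p a q = 0 := by
            show (if (p.2.Nonempty ∧ ∃ so ∈ p.2, a ∈ allowed M U0 F0 so) then
                (if q.2 = updateV M O U0 F0 p.2 a q.1 then M.P p.1 a q.1 else 0)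
              else (if q = (p.1, (∅ : Set S)) then 1 else 0)) = 0
            rw [if_neg hc, if_neg hneq]
          rw [h0] at hP
          exact lt_irrefl 0 hP
        exact hne (a, q) List.mem_cons_self (by rw [hq])

end Transfer2

section Transfer3

variable {S A : Type} [Fintype S] [Fintype A]

omit [Fintype S] [Fintype A] in
lemma stateAt_succ_eq {X : Type} (p0 : X) (l : List (A × X)) (j : ℕ)
    (hj : j < l.length) : stateAt p0 l (j + 1) = (l.map Prod.snd)[j]'(by simpa) := by
  show (l[j]?.map Prod.snd).getD p0 = _
  rw [List.getElem?_eq_getElem hj]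
  simp

omit [Fintype S] [Fintype A] in
lemma satAt_ne_empty {U1 F1 : Set S} (p0 : S × Set S) (l : List (A × (S × Set S)))
    (h : satAt (augU U1) (augF F1) p0 l l.length) :
    ∀ x ∈ l, x.2.2 ≠ (∅ : Set S) := by
  intro x hx hxe
  obtain ⟨i, hi, hget⟩ := List.mem_iff_getElem.mp hx
  have hstate : stateAt p0 l (i + 1) = x.2 := by
    rw [stateAt_succ_eq p0 l i hi]
    simp [hget]
  rcases Nat.lt_or_ge (i + 1) l.length with hlt | hge
  · exact h.2 (i + 1) hlt (Set.mem_union_left _ (by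
      show _ ∈ augU U1
      rw [hstate]
      exact Or.inr hxe))
  · have heq : i + 1 = l.length := by omega
    have := h.1
    rw [← heq, hstate] at this
    exact this.2 hxe

omit [Fintype S] [Fintype A] in
lemma satAt_transfer {U1 F1 : Set S} (p0 : S × Set S) (l l' : List (A × (S × Set S)))
    (hf : List.Forall₂ (fun q q' : S × Set S => q'.1 = q.1 ∧ q.2 ⊆ q'.2)
      (l.map Prod.snd) (l'.map Prod.snd))
    (h : satAt (augU U1) (augF F1) p0 l l.length) :
    satAt (augU U1) (augF F1) p0 l' l.length := by
  obtain ⟨hlen, hpt⟩ := List.forall₂_iff_get.mp hf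
  simp only [List.length_map] at hlen
  have hrel : ∀ i ≤ l.length,
      (stateAt p0 l' i).1 = (stateAt p0 l i).1 ∧
        (stateAt p0 l i).2 ⊆ (stateAt p0 l' i).2 := by
    intro i hi
    cases i with
    | zero => exact ⟨rfl, le_refl _⟩
    | succ j =>
        have hj : j < l.length := by omega
        have hj' : j < l'.length := by omega
        rw [stateAt_succ_eq p0 l j hj, stateAt_succ_eq p0 l' j hj']
        have := hpt j (by simpa) (by simpa)
        simpa using this
  have hne : ∀ i ≤ l.length, (stateAt p0 l i).2 ≠ (∅ : Set S) := by
    intro i hi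
    rcases Nat.lt_or_ge i l.length with hlt | hge
    · intro hc
      exact h.2 i hlt (Set.mem_union_left _ (Or.inr hc))
    · have heq : i = l.length := by omega
      subst heq
      exact h.1.2
  have hne' : ∀ i ≤ l.length, (stateAt p0 l' i).2 ≠ (∅ : Set S) := by
    intro i hi hc
    apply hne i hi
    have hsub := (hrel i hi).2
    rw [hc] at hsub
    exact Set.subset_empty_iff.mp hsub
  constructor
  · have h1 := h.1
    exact ⟨(hrel l.length (le_refl _)).1 ▸ h1.1, hne' l.length (le_refl _)⟩
  · intro i hi hc
    have hU : (stateAt p0 l i).1 ∉ U1 ∧ (stateAt p0 l i).1 ∉ F1 := by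
      constructor
      · intro hu
        exact h.2 i hi (Set.mem_union_left _ (Or.inl ⟨hu, hne i (le_of_lt hi)⟩))
      · intro hu
        exact h.2 i hi (Set.mem_union_right _ ⟨hu, hne i (le_of_lt hi)⟩)
    have hfst := (hrel i (le_of_lt hi)).1
    rcases hc with hc | hc
    · rcases hc with ⟨hu, _⟩ | hc
      · exact hU.1 (hfst ▸ hu)
      · exact hne' i (le_of_lt hi) hc
    · exact hU.2 (hfst ▸ hc.1)

end Transfer3

section Final

variable {S A : Type} [Fintype S] [Fintype A]

lemma exactProb_le (M : MDP S A) (O : ObsFun M) (U0 F0 U1 F1 : Set S)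
    (π : Strategy (augV M O U0 F0)) (p0 : S × Set S) (k : ℕ) :
    exactProb (augV M O U0 F0) π.toFun (augU U1) (augF F1) p0 k
      ≤ exactProb (augInv M O U0 F0) (transStrat M O U0 F0 π).toFun
          (augU U1) (augF F1) p0 k := by
  classical
  set tV : (Fin k → A × (S × Set S)) → ℝ := fun g =>
    if satAt (augU U1) (augF F1) p0 (List.ofFn g) k
      then prHist (augV M O U0 F0) π.toFun p0 (List.ofFn g) else 0 with htV
  set tI : (Fin k → A × (S × Set S)) → ℝ := fun g =>
    if satAt (augU U1) (augF F1) p0 (List.ofFn g) k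
      then prHist (augInv M O U0 F0) (transStrat M O U0 F0 π).toFun p0 (List.ofFn g) else 0 with htI
  set D : Finset (Fin k → A × (S × Set S)) :=
    Finset.univ.filter (fun g => tV g ≠ 0) with hD
  -- facts about members of D
  have hmem : ∀ g ∈ D, satAt (augU U1) (augF F1) p0 (List.ofFn g) k ∧
      goodVb M O U0 F0 p0.2 (List.ofFn g) := by
    intro g hg
    rw [hD, Finset.mem_filter] at hg
    have hne := hg.2
    by_cases hs : satAt (augU U1) (augF F1) p0 (List.ofFn g) k
    · have hpr : prHist (augV M O U0 F0) π.toFun p0 (List.ofFn g) ≠ 0 := by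
        intro hc
        apply hne
        rw [htV]
        simp [hs, hc]
      have hh : isHist (augV M O U0 F0) p0 (List.ofFn g) :=
        prFrom_ne_zero_isHist (augV M O U0 F0) π p0 (List.ofFn g) [] hpr
      have hlen : (List.ofFn g).length = k := List.length_ofFn
      refine ⟨hs, goodVb_of_isHist M O U0 F0 (List.ofFn g) p0 hh ?_⟩
      exact satAt_ne_empty p0 (List.ofFn g) (by rw [hlen]; exact hs)
    · exfalso; apply hne; rw [htV]; simp [hs]
  -- the belief-replacing map
  have hlenfix : ∀ g : Fin k → A × (S × Set S),
      (ifix M O U0 F0 p0.2 (List.ofFn g)).length = k := by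
    intro g
    rw [ifix_length, List.length_ofFn]
  set Φ : (Fin k → A × (S × Set S)) → (Fin k → A × (S × Set S)) := fun g i =>
    (ifix M O U0 F0 p0.2 (List.ofFn g))[(i : ℕ)]'(by rw [hlenfix]; exact i.2) with hΦ
  have hofn : ∀ g, List.ofFn (Φ g) = ifix M O U0 F0 p0.2 (List.ofFn g) := by
    intro g
    refine List.ext_getElem (by rw [List.length_ofFn, hlenfix]) ?_
    intro j h1 h2
    rw [List.getElem_ofFn]
  -- value transfer on D
  have hval : ∀ g ∈ D, tI (Φ g) = tV g := by
    intro g hg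
    obtain ⟨hs, hgood⟩ := hmem g hg
    have hsat' : satAt (augU U1) (augF F1) p0 (List.ofFn (Φ g)) k := by
      rw [hofn]
      have := satAt_transfer p0 (List.ofFn g) (ifix M O U0 F0 p0.2 (List.ofFn g))
        (forall₂_ifix M O U0 F0 (List.ofFn g) p0.2 p0.2 (le_refl _) hgood)
        (by rw [List.length_ofFn]; exact hs)
      rwa [List.length_ofFn] at this
    have hpr : prHist (augInv M O U0 F0) (transStrat M O U0 F0 π).toFun p0 (List.ofFn (Φ g))
        = prHist (augV M O U0 F0) π.toFun p0 (List.ofFn g) := by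
      rw [hofn]
      exact prFrom_transfer M O U0 F0 π (List.ofFn g) [] [] p0 p0.1 p0.2 p0.2
        rfl (Prod.mk.eta) (Prod.mk.eta) (le_refl _) hgood
    rw [htI, htV]
    simp only [hsat', hs, if_true]
    exact hpr
  -- injectivity of Φ on D
  have hinj : ∀ g1 ∈ D, ∀ g2 ∈ D, Φ g1 = Φ g2 → g1 = g2 := by
    intro g1 hg1 g2 hg2 heq
    have h1 : List.ofFn (Φ g1) = List.ofFn (Φ g2) := by rw [heq]
    rw [hofn, hofn] at h1
    have h2 : (List.ofFn g1).map (fun x => (x.1, x.2.1))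
        = (List.ofFn g2).map (fun x => (x.1, x.2.1)) := by
      rw [← ifix_fst M O U0 F0 (List.ofFn g1) p0.2,
        ← ifix_fst M O U0 F0 (List.ofFn g2) p0.2, h1]
    have h3 : vfix M O U0 F0 p0.2 (List.ofFn g1)
        = vfix M O U0 F0 p0.2 (List.ofFn g2) := vfix_congr M O U0 F0 _ _ _ h2
    rw [vfix_of_goodVb M O U0 F0 _ _ (hmem g1 hg1).2,
      vfix_of_goodVb M O U0 F0 _ _ (hmem g2 hg2).2] at h3
    exact List.ofFn_inj.mp h3
  have hnonnegI : ∀ g, 0 ≤ tI g := by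
    intro g
    simp only [htI]
    split_ifs
    · exact prHist_nonneg (augInv M O U0 F0) (transStrat M O U0 F0 π) p0 _
    · exact le_refl 0
  calc exactProb (augV M O U0 F0) π.toFun (augU U1) (augF F1) p0 k
      = ∑ g ∈ D, tV g := (Finset.sum_filter_ne_zero Finset.univ).symm
    _ = ∑ g ∈ D, tI (Φ g) := (Finset.sum_congr rfl fun g hg => (hval g hg).symm)
    _ = ∑ g' ∈ D.image Φ, tI g' := (Finset.sum_image hinj).symm
    _ ≤ ∑ g' ∈ Finset.univ, tI g' :=
        Finset.sum_le_sum_of_subset_of_nonneg (Finset.subset_univ _)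
          (fun g _ _ => hnonnegI g)
    _ = exactProb (augInv M O U0 F0) (transStrat M O U0 F0 π).toFun (augU U1) (augF F1) p0 k := rfl

end Final

/-- if the attacker has a non-revealing intention-deception almost-sure
winning strategy against the action-visible defender (the initial augmented state is in
the ASW region of `M~`), then he has one against the action-invisible defender. -/
theorem visible_ASW_imp_invisible_ASW (M : MDP S A) (O : ObsFun M)
    (U0 F0 U1 F1 : Set S) (h0 : Disjoint U0 F0) (h1 : Disjoint U1 F1)
    (h : (M.init, O.obs M.init) ∈ ASW (augV M O U0 F0) (augU U1) (augF F1)) :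
    (M.init, O.obs M.init) ∈ ASW (augInv M O U0 F0) (augU U1) (augF F1) := by
  obtain ⟨π, hπ⟩ := h
  set p0 : S × Set S := (M.init, O.obs M.init) with hp0
  set πI := transStrat M O U0 F0 π with hπI
  refine ⟨πI, ?_⟩
  have hle : ∀ n, satProbN (augV M O U0 F0) π.toFun (augU U1) (augF F1) p0 n
      ≤ satProbN (augInv M O U0 F0) πI.toFun (augU U1) (augF F1) p0 n := by
    intro n
    rw [satProbN_eq_sum_exactProb (augV M O U0 F0) π,
      satProbN_eq_sum_exactProb (augInv M O U0 F0) πI]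
    exact Finset.sum_le_sum fun k _ => exactProb_le M O U0 F0 U1 F1 π p0 k
  have hub : ∀ n, satProbN (augInv M O U0 F0) πI.toFun (augU U1) (augF F1) p0 n ≤ 1 :=
    satProbN_le_one (augInv M O U0 F0) πI (augU U1) (augF F1) p0
  have hbdd : BddAbove (Set.range
      (satProbN (augInv M O U0 F0) πI.toFun (augU U1) (augF F1) p0)) := by
    refine ⟨1, ?_⟩
    rintro x ⟨n, rfl⟩
    exact hub n
  refine le_antisymm (ciSup_le hub) ?_
  have h1 : (1 : ℝ) = prSat (augV M O U0 F0) π.toFun (augU U1) (augF F1) p0 := hπ.symm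
  rw [h1]
  exact ciSup_mono hbdd hle
end
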